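/- Counimodular case: if ε ∘ σ = ε (i.e. the modular element of the dual is trivial), then σ = S², that is, φ(ab) = φ(b·S²(a)) for all a, b ∈ A. -/

import Mathlib

open TensorProduct HopfAlgebra

section CounimodularAux

open Coalgebra LinearMap

variable {A : Type*} [Ring A] [HopfAlgebra ℂ A]

private lemma rid_map_eq' (g : A →ₗ[ℂ] A) (f : A →ₗ[ℂ] ℂ) (u : A ⊗[ℂ] A) :
    TensorProduct.rid ℂ A (TensorProduct.map g f u)
      = g (TensorProduct.rid ℂ A (f.lTensor A u)) := by
  induction u using TensorProduct.induction_on with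
  | zero => simp
  | tmul x y => simp
  | add u v hu hv => simp [hu, hv]

private lemma Q_one_tmul_mul' (φ : A →ₗ[ℂ] ℂ) (b : A) (u : A ⊗[ℂ] A) :
    TensorProduct.rid ℂ A (φ.lTensor A ((1 ⊗ₜ[ℂ] b) * u)) =
    TensorProduct.rid ℂ A ((φ ∘ₗ LinearMap.mulLeft ℂ b).lTensor A u) := by
  induction u using TensorProduct.induction_on with
  | zero => simp
  | tmul p q => simp [Algebra.TensorProduct.tmul_mul_tmul]
  | add u v hu hv => simp [mul_add, hu, hv]

private lemma Q_tmul_one_mul' (φ : A →ₗ[ℂ] ℂ) (c : A) (u : A ⊗[ℂ] A) :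
    TensorProduct.rid ℂ A (φ.lTensor A ((c ⊗ₜ[ℂ] 1) * u)) =
    c * TensorProduct.rid ℂ A (φ.lTensor A u) := by
  induction u using TensorProduct.induction_on with
  | zero => simp
  | tmul p q => simp [Algebra.TensorProduct.tmul_mul_tmul, mul_smul_comm]
  | add u v hu hv => simp [mul_add, hu, hv]

private lemma lTensor_map_eq' (f : A →ₗ[ℂ] ℂ) (g : A →ₗ[ℂ] A) (h : A →ₗ[ℂ] A)
    (u : A ⊗[ℂ] A) :
    f.lTensor A (TensorProduct.map g h u) = TensorProduct.map g (f ∘ₗ h) u := by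
  induction u using TensorProduct.induction_on with
  | zero => simp
  | tmul x y => simp
  | add u v hu hv => simp [hu, hv]

/-- Tensor separation: functionals `φ(a * ·)` applied on the right leg jointly
detect zero, by right-faithfulness of `φ`. -/
private lemma tensor_sep' (φ : A →ₗ[ℂ] ℂ)
    (hφf2 : ∀ a : A, (∀ b : A, φ (b * a) = 0) → a = 0)
    (t : A ⊗[ℂ] A)
    (h : ∀ a : A,
      TensorProduct.rid ℂ A ((φ ∘ₗ LinearMap.mulLeft ℂ a).lTensor A t) = 0) :
    t = 0 := by
  classical
  set β := Module.Basis.ofVectorSpace ℂ A with hβ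
  set e : A ⊗[ℂ] A ≃ₗ[ℂ] _ →₀ A :=
    (TensorProduct.congr β.repr (LinearEquiv.refl ℂ A)).trans
      (TensorProduct.finsuppScalarLeft ℂ A _) with he
  have key : ∀ (f : A →ₗ[ℂ] ℂ) (u : A ⊗[ℂ] A) i,
      β.repr (TensorProduct.rid ℂ A (f.lTensor A u)) i = f (e u i) := by
    intro f u i
    induction u using TensorProduct.induction_on with
    | zero => simp
    | tmul x z => simp [he, TensorProduct.congr_tmul, mul_comm]
    | add u v hu hv => simp [hu, hv]
  have ht : ∀ i, e t i = 0 := by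
    intro i
    refine hφf2 _ fun a => ?_
    have h1 := key (φ ∘ₗ LinearMap.mulLeft ℂ a) t i
    rw [h a] at h1
    simpa using h1.symm
  have : e t = 0 := Finsupp.ext ht
  exact (LinearEquiv.map_eq_zero_iff e).mp this

/-- Strong left invariance : `Σ a₁ φ(b a₂) = Σ S(b₁) φ(b₂ a)`. -/
private lemma strong_inv (φ : A →ₗ[ℂ] ℂ)
    (hφL : ∀ a : A,
      TensorProduct.rid ℂ A (φ.lTensor A (Coalgebra.comul a)) = φ a • (1 : A))
    (a b : A) :
    TensorProduct.rid ℂ A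
        ((φ ∘ₗ LinearMap.mulLeft ℂ b).lTensor A (Coalgebra.comul a)) =
    TensorProduct.rid ℂ A
        (TensorProduct.map (antipode (R := ℂ)) (φ ∘ₗ LinearMap.mulRight ℂ a)
          (Coalgebra.comul b)) := by
  set P : A ⊗[ℂ] A →ₗ[ℂ] A :=
    (TensorProduct.rid ℂ A).toLinearMap ∘ₗ φ.lTensor A ∘ₗ
      LinearMap.mulRight ℂ (Coalgebra.comul a) with hPdef
  have hPapp : ∀ u : A ⊗[ℂ] A,
      P u = TensorProduct.rid ℂ A (φ.lTensor A (u * Coalgebra.comul a)) := by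
    intro u; simp [hPdef]
  have hP : ∀ x : A, P (Coalgebra.comul x) = φ (x * a) • 1 := by
    intro x
    rw [hPapp, ← Bialgebra.comul_mul, hφL]
  set W : A ⊗[ℂ] (A ⊗[ℂ] A) →ₗ[ℂ] A :=
    LinearMap.mul' ℂ A ∘ₗ TensorProduct.map (antipode (R := ℂ)) P with hWdef
  have hW : W ∘ₗ (TensorProduct.assoc ℂ A A A).toLinearMap
      = P ∘ₗ (LinearMap.mul' ℂ A ∘ₗ (antipode (R := ℂ)).rTensor A).rTensor A := by
    apply TensorProduct.ext_threefold
    intro x y z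
    have h1 : (((antipode (R := ℂ) x) * y) ⊗ₜ[ℂ] z : A ⊗[ℂ] A)
        = ((antipode (R := ℂ) x) ⊗ₜ[ℂ] (1 : A)) * (y ⊗ₜ[ℂ] z) := by
      simp [Algebra.TensorProduct.tmul_mul_tmul]
    simp only [hWdef, LinearMap.comp_apply, LinearEquiv.coe_coe,
      TensorProduct.assoc_tmul, TensorProduct.map_tmul, LinearMap.mul'_apply,
      LinearMap.rTensor_tmul]
    rw [hPapp, hPapp, h1, mul_assoc, Q_tmul_one_mul']
  have step1 : TensorProduct.rid ℂ A
      ((φ ∘ₗ LinearMap.mulLeft ℂ b).lTensor A (Coalgebra.comul a))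
      = P ((1 : A) ⊗ₜ[ℂ] b) := by
    rw [hPapp, ← Q_one_tmul_mul']
  have step2 :
      ((LinearMap.mul' ℂ A ∘ₗ (antipode (R := ℂ)).rTensor A).rTensor A)
        ((Coalgebra.comul (R := ℂ) (A := A)).rTensor A (Coalgebra.comul b))
      = (1 : A) ⊗ₜ[ℂ] b := by
    rw [← LinearMap.rTensor_comp_apply]
    have : (LinearMap.mul' ℂ A ∘ₗ (antipode (R := ℂ)).rTensor A) ∘ₗ
        (Coalgebra.comul (R := ℂ) (A := A))
        = Algebra.linearMap ℂ A ∘ₗ Coalgebra.counit := by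
      rw [LinearMap.comp_assoc]
      exact HopfAlgebra.mul_antipode_rTensor_comul
    rw [this, LinearMap.rTensor_comp_apply, Coalgebra.rTensor_counit_comul]
    simp
  have step3 : P ((1 : A) ⊗ₜ[ℂ] b)
      = W ((Coalgebra.comul (R := ℂ) (A := A)).lTensor A (Coalgebra.comul b)) := by
    rw [← step2, ← LinearMap.comp_apply, ← hW, LinearMap.comp_apply]
    exact congrArg W (Coalgebra.coassoc_apply b)
  have step4 : W ((Coalgebra.comul (R := ℂ) (A := A)).lTensor A (Coalgebra.comul b))
      = TensorProduct.rid ℂ A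
        (TensorProduct.map (antipode (R := ℂ)) (φ ∘ₗ LinearMap.mulRight ℂ a)
          (Coalgebra.comul b)) := by
    have hmap : W ∘ₗ (Coalgebra.comul (R := ℂ) (A := A)).lTensor A
        = (TensorProduct.rid ℂ A).toLinearMap ∘ₗ
            TensorProduct.map (antipode (R := ℂ)) (φ ∘ₗ LinearMap.mulRight ℂ a) := by
      apply TensorProduct.ext'
      intro x y
      simp only [hWdef, LinearMap.comp_apply, LinearMap.lTensor_tmul,
        TensorProduct.map_tmul, LinearMap.mul'_apply, LinearEquiv.coe_coe,
        TensorProduct.rid_tmul, hP]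
      simp [mul_smul_comm]
    rw [← LinearMap.comp_apply, hmap]; rfl
  rw [step1, step3, step4]

end CounimodularAux

/-- Counimodular case: if `ε ∘ σ = ε` then `σ = S²`, i.e.
`φ(ab) = φ(b S²(a))` for all `a, b ∈ A`. -/
theorem counimodular_sigma_eq_antipode_sq
    {A : Type*} [Ring A] [HopfAlgebra ℂ A]
    (hS : Function.Bijective (antipode (R := ℂ) (A := A)))
    (φ : A →ₗ[ℂ] ℂ) (hφ0 : φ ≠ 0)
    (hφL : ∀ a : A,
      (TensorProduct.rid ℂ A) (LinearMap.lTensor A φ (Coalgebra.comul a)) = φ a • (1 : A))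
    (hφf1 : ∀ a : A, (∀ b : A, φ (a * b) = 0) → a = 0)
    (hφf2 : ∀ a : A, (∀ b : A, φ (b * a) = 0) → a = 0)
    (σ : A ≃ₐ[ℂ] A) (hσ : ∀ a b : A, φ (a * b) = φ (b * σ a))
    (hcounimod : ∀ a : A, Coalgebra.counit (R := ℂ) (σ a) = Coalgebra.counit (R := ℂ) a) :
    ∀ a b : A, φ (a * b) = φ (b * antipode (R := ℂ) (antipode (R := ℂ) a)) := by
  set SS : A →ₗ[ℂ] A := antipode (R := ℂ) ∘ₗ antipode (R := ℂ) with hSS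
  have hσS : ∀ c : A, σ c = SS c := by
    intro c
    -- functional identities from the modular property
    have hRL : ∀ x : A,
        φ ∘ₗ LinearMap.mulRight ℂ (σ x) = φ ∘ₗ LinearMap.mulLeft ℂ x := by
      intro x; ext y
      exact (hσ x y).symm
    have hcomul : Coalgebra.comul (R := ℂ) (σ c)
        = TensorProduct.map SS σ.toLinearMap (Coalgebra.comul c) := by
      have hE : ∀ a : A,
          TensorProduct.rid ℂ A ((φ ∘ₗ LinearMap.mulLeft ℂ a).lTensor A
            (Coalgebra.comul (R := ℂ) (σ c)
              - TensorProduct.map SS σ.toLinearMap (Coalgebra.comul c))) = 0 := by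
        intro a
        rw [map_sub, map_sub, sub_eq_zero]
        -- LHS of (E)
        have l1 := strong_inv φ hφL (σ c) a
        rw [hRL c] at l1
        have l2 := strong_inv φ hφL a c
        -- RHS: push lTensor through the map
        have r1 : (φ ∘ₗ LinearMap.mulLeft ℂ a).lTensor A
            (TensorProduct.map SS σ.toLinearMap (Coalgebra.comul c))
            = TensorProduct.map SS (φ ∘ₗ LinearMap.mulRight ℂ a)
                (Coalgebra.comul (R := ℂ) c) := by
          have hfa : (φ ∘ₗ LinearMap.mulLeft ℂ a) ∘ₗ σ.toLinearMap
              = φ ∘ₗ LinearMap.mulRight ℂ a := by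
            apply LinearMap.ext; intro y
            exact (hσ y a).symm
          rw [lTensor_map_eq', hfa]
        calc TensorProduct.rid ℂ A ((φ ∘ₗ LinearMap.mulLeft ℂ a).lTensor A
              (Coalgebra.comul (R := ℂ) (σ c)))
            = TensorProduct.rid ℂ A
                (TensorProduct.map (antipode (R := ℂ)) (φ ∘ₗ LinearMap.mulLeft ℂ c)
                  (Coalgebra.comul a)) := l1
          _ = antipode (R := ℂ) (TensorProduct.rid ℂ A
                ((φ ∘ₗ LinearMap.mulLeft ℂ c).lTensor A (Coalgebra.comul a))) :=
              rid_map_eq' _ _ _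
          _ = antipode (R := ℂ) (TensorProduct.rid ℂ A
                (TensorProduct.map (antipode (R := ℂ)) (φ ∘ₗ LinearMap.mulRight ℂ a)
                  (Coalgebra.comul c))) := by rw [l2]
          _ = antipode (R := ℂ) (antipode (R := ℂ) (TensorProduct.rid ℂ A
                ((φ ∘ₗ LinearMap.mulRight ℂ a).lTensor A (Coalgebra.comul c)))) := by
              rw [rid_map_eq']
          _ = TensorProduct.rid ℂ A
                (TensorProduct.map SS (φ ∘ₗ LinearMap.mulRight ℂ a)
                  (Coalgebra.comul c)) := by
              rw [rid_map_eq' SS]; rfl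
          _ = TensorProduct.rid ℂ A ((φ ∘ₗ LinearMap.mulLeft ℂ a).lTensor A
                (TensorProduct.map SS σ.toLinearMap (Coalgebra.comul c))) := by
              rw [r1]
      have := tensor_sep' φ hφf2 _ hE
      exact sub_eq_zero.mp this
    -- apply (id ⊗ ε)
    have happ := congrArg (fun u : A ⊗[ℂ] ℂ => TensorProduct.rid ℂ A u)
      (congrArg ((Coalgebra.counit (R := ℂ) (A := A)).lTensor A) hcomul)
    rw [Coalgebra.lTensor_counit_comul] at happ
    have hrhs : (Coalgebra.counit (R := ℂ) (A := A)).lTensor A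
        (TensorProduct.map SS σ.toLinearMap (Coalgebra.comul c))
        = TensorProduct.map SS (Coalgebra.counit (R := ℂ) (A := A))
            (Coalgebra.comul c) := by
      have hce : (Coalgebra.counit (R := ℂ) (A := A)) ∘ₗ σ.toLinearMap
          = Coalgebra.counit (R := ℂ) (A := A) := by
        apply LinearMap.ext; intro y
        exact hcounimod y
      rw [lTensor_map_eq', hce]
    rw [hrhs, rid_map_eq' SS] at happ
    rw [Coalgebra.lTensor_counit_comul] at happ
    simpa using happ
  intro a b
  rw [hσ a b, hσS a, hSS]
  rfl
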